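/- Let k and s be natural numbers with 1 ≤ s ≤ k, and let λ > 1 be a real number with μ := (λ-1)/2. For each r ∈ {1,…,k}, let t^{(r)} : ℕ → ℝ be a nondecreasing sequence of positive reals (a single-robot zigzag strategy on the line). Say a point x ≥ 1 is λ-covered by strategy r if there exists an index i with x ≤ t^{(r)}_i and μ·x ≥ t^{(r)}_1 + t^{(r)}_2 + ⋯ + t^{(r)}_i. If every x ≥ 1 is λ-covered by at least s of the k strategies, then λ ≥ 2·((k+s)^{k+s}/(s^s · k^k))^{1/k} + 1. -/

import Mathlib

open Real Finset Filter

lemma zz_amgm (q b : ℝ) (hq : 0 < q) (hb : 1 < b) :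
    (1+q)^(1+q) / q^q * (b-1) ≤ b^(1+q) := by
  have h1q : (0:ℝ) < 1 + q := by linarith
  set θ : ℝ := 1/(1+q) with hθdef
  have hθ : 0 < θ := by positivity
  have hθ1 : 0 ≤ 1 - θ := by
    have : θ ≤ 1 := by rw [hθdef, div_le_one h1q]; linarith
    linarith
  have hw : θ + (1 - θ) = 1 := by ring
  have hp1 : (0:ℝ) ≤ (b-1)*(1+q) := by nlinarith
  have hp2 : (0:ℝ) ≤ (1+q)/q := by positivity
  have key := Real.geom_mean_le_arith_mean2_weighted hθ.le hθ1 hp1 hp2 hw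
  have harith : θ * ((b-1)*(1+q)) + (1-θ) * ((1+q)/q) = b := by
    rw [hθdef]; field_simp; ring
  rw [harith] at key
  have hlhs0 : 0 ≤ ((b-1)*(1+q))^θ * ((1+q)/q)^(1-θ) := by positivity
  have hmain := Real.rpow_le_rpow hlhs0 key h1q.le
  have e1 : θ * (1+q) = 1 := by rw [hθdef]; field_simp
  have e2 : (1-θ) * (1+q) = q := by rw [hθdef]; field_simp; ring
  have hexpand : (((b-1)*(1+q))^θ * ((1+q)/q)^(1-θ))^(1+q)
      = ((b-1)*(1+q)) * ((1+q)/q)^q := by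
    rw [Real.mul_rpow (by positivity) (by positivity),
      ← Real.rpow_mul hp1, ← Real.rpow_mul hp2, e1, e2, Real.rpow_one]
  rw [hexpand] at hmain
  have e3 : ((1+q)/q)^q = (1+q)^q / q^q := Real.div_rpow h1q.le hq.le q
  have e4 : (1+q)^(1+q) = (1+q) * (1+q)^q := by
    rw [Real.rpow_add h1q, Real.rpow_one]
  calc (1+q)^(1+q) / q^q * (b-1) = ((b-1)*(1+q)) * ((1+q)^q/q^q) := by
        rw [e4]; ring
    _ = ((b-1)*(1+q)) * ((1+q)/q)^q := by rw [e3]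
    _ ≤ b^(1+q) := hmain

lemma zz_choose_q (μ q0 : ℝ) (hq0 : 0 < q0) (hμ : μ < (1+q0)^(1+q0)/q0^q0) :
    ∃ q : ℝ, 0 < q ∧ q < q0 ∧ μ ≤ (1+q)^(1+q)/q^q := by
  set g : ℝ → ℝ := fun x => (1+x)^(1+x)/x^x with hg
  have hdiag : ContinuousAt (fun x : ℝ => (x, x)) q0 :=
    continuousAt_id.prodMk continuousAt_id
  have hdiag2 : ContinuousAt (fun x : ℝ => (1+x, 1+x)) q0 :=
    (continuousAt_const.add continuousAt_id).prodMk (continuousAt_const.add continuousAt_id)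
  have hcont : ContinuousAt g q0 := by
    apply ContinuousAt.div
    · exact show ContinuousAt ((fun p : ℝ × ℝ => p.1 ^ p.2) ∘ (fun x => (1+x, 1+x))) q0 from
        ContinuousAt.comp (f := fun x : ℝ => (1+x, 1+x))
          (Real.continuousAt_rpow (1+q0, 1+q0)
            (Or.inr (show (0:ℝ) < 1+q0 by linarith))) hdiag2
    · exact show ContinuousAt ((fun p : ℝ × ℝ => p.1 ^ p.2) ∘ (fun x => (x, x))) q0 from
        ContinuousAt.comp (f := fun x : ℝ => (x, x))
          (Real.continuousAt_rpow (q0, q0) (Or.inr hq0)) hdiag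
    · positivity
  have htend : Tendsto g (nhdsWithin q0 (Set.Iio q0)) (nhds (g q0)) :=
    hcont.continuousWithinAt.tendsto
  have hev1 : ∀ᶠ x in nhdsWithin q0 (Set.Iio q0), μ < g x :=
    htend.eventually (eventually_gt_nhds hμ)
  have hev2 : ∀ᶠ x in nhdsWithin q0 (Set.Iio q0), 0 < x :=
    eventually_nhdsWithin_of_eventually_nhds (eventually_gt_nhds hq0)
  have hev3 : ∀ᶠ x in nhdsWithin q0 (Set.Iio q0), x < q0 :=
    eventually_mem_nhdsWithin.mono (fun x hx => hx)
  obtain ⟨x, h1, h2, h3⟩ := (hev1.and (hev2.and hev3)).exists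
  exact ⟨x, h2, h3, h1.le⟩

lemma zz_key (t S : ℕ → ℝ) (hpos : ∀ i, 0 < t i)
    (hSpos : ∀ i, 0 < S i) (hts : ∀ i, t i ≤ S i)
    (hSstep : ∀ i i', i < i' → S i + t i' ≤ S i')
    (μ q β : ℝ) (hμ : 1 < μ) (hq : 0 < q) (hβ : 1 < β)
    (hAM : ∀ b : ℝ, 1 < b → μ * (b-1) ≤ b ^ (1+q))
    (Idx : ℕ → ℕ) :
    ∀ (n : ℕ) (G : Finset ℕ) (hne : G.Nonempty), G.card = n →
    (∀ j ∈ G, (β:ℝ)^j ≤ t (Idx j)) →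
    (∀ j ∈ G, S (Idx j) ≤ μ * β^j) →
    (∀ j ∈ G, ∀ j' ∈ G, j ≤ j' → Idx j ≤ Idx j') →
    ((G.card : ℝ) - 1) * Real.log β ≤
      (Real.log (t (Idx (G.min' hne))) - (G.min' hne : ℝ) * Real.log β)
      + (q + Real.log β / Real.log (μ/(μ-1))) *
        (Real.log (S (Idx (G.max' hne))) - Real.log (S (Idx (G.min' hne)))) := by
  have hL : 0 < Real.log β := Real.log_pos hβ
  have hμ1 : 0 < μ - 1 := by linarith
  have hρ : 1 < μ/(μ-1) := by rw [lt_div_iff₀ hμ1]; linarith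
  have hLρ : 0 < Real.log (μ/(μ-1)) := Real.log_pos hρ
  set K : ℝ := q + Real.log β / Real.log (μ/(μ-1)) with hK
  have hKpos : 0 < K := by positivity
  clear_value K
  intro n
  induction n with
  | zero =>
    intro G hne hcard
    exact absurd (Finset.card_eq_zero.mp hcard) hne.ne_empty
  | succ n ih =>
    intro G hne hcard h1 h2 h3
    rcases Nat.eq_zero_or_pos n with hn0 | hn
    · -- base : card = 1
      subst hn0
      obtain ⟨j, rfl⟩ := Finset.card_eq_one.mp hcard
      have hmin : ({j} : Finset ℕ).min' (by simp) = j := Finset.min'_singleton j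
      have hmax : ({j} : Finset ℕ).max' (by simp) = j := Finset.max'_singleton j
      rw [hmin, hmax] at *
      have hj : j ∈ ({j} : Finset ℕ) := Finset.mem_singleton_self j
      have h1j := h1 j hj
      have : (j : ℝ) * Real.log β ≤ Real.log (t (Idx j)) := by
        have := Real.log_le_log (by positivity) h1j
        rwa [Real.log_pow] at this
      simp only [Finset.card_singleton]
      push_cast
      nlinarith
    · -- step
      set j0 := G.min' hne with hj0def
      have hj0 : j0 ∈ G := G.min'_mem hne
      set G' := G.erase j0 with hG'def
      have hcard' : G'.card = n := by
        rw [hG'def, Finset.card_erase_of_mem hj0, hcard]; omega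
      have hne' : G'.Nonempty := Finset.card_pos.mp (by omega)
      set j1 := G'.min' hne' with hj1def
      have hj1G' : j1 ∈ G' := G'.min'_mem hne'
      have hj1G : j1 ∈ G := Finset.mem_of_mem_erase hj1G'
      have hj01 : j0 < j1 := Finset.min'_lt_of_mem_erase_min' G hne hj1G'
      have hmaxmem : G.max' hne ∈ G' := by
        refine Finset.mem_erase.mpr ⟨?_, G.max'_mem hne⟩
        have := Finset.le_max' G j1 hj1G
        omega
      have hmaxeq : G'.max' hne' = G.max' hne :=
        le_antisymm (Finset.max'_subset hne' (Finset.erase_subset _ _))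
          (Finset.le_max' G' _ hmaxmem)
      have IH := ih G' hne' hcard' (fun j hj => h1 j (Finset.mem_of_mem_erase hj))
        (fun j hj => h2 j (Finset.mem_of_mem_erase hj))
        (fun j hj j' hj' hle => h3 j (Finset.mem_of_mem_erase hj) j'
          (Finset.mem_of_mem_erase hj') hle)
      rw [hmaxeq] at IH
      set M := G.max' hne with hMdef
      have ha0p : 0 < S (Idx j0) := hSpos _
      have ha1p : 0 < S (Idx j1) := hSpos _
      -- step inequality
      have hstep : (Real.log (t (Idx j1)) - (j1 : ℝ) * Real.log β)
            + K * (Real.log (S (Idx M)) - Real.log (S (Idx j1)))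
            + Real.log β
          ≤ (Real.log (t (Idx j0)) - (j0 : ℝ) * Real.log β)
            + K * (Real.log (S (Idx M)) - Real.log (S (Idx j0))) := by
        have hIdxle : Idx j0 ≤ Idx j1 := h3 j0 hj0 j1 hj1G hj01.le
        rcases eq_or_lt_of_le hIdxle with heq | hlt
        · rw [← heq]
          have hj01R : (j0 : ℝ) + 1 ≤ (j1 : ℝ) := by exact_mod_cast hj01
          have := mul_le_mul_of_nonneg_right hj01R hL.le
          linarith
        · -- case B
          have ha01 : S (Idx j0) + t (Idx j1) ≤ S (Idx j1) := hSstep _ _ hlt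
          have hb : 1 < S (Idx j1) / S (Idx j0) := by
            rw [lt_div_iff₀ ha0p]; nlinarith [hpos (Idx j1)]
          have hAMb := hAM _ hb
          have hmul : μ * t (Idx j1) ≤ S (Idx j0) * (S (Idx j1) / S (Idx j0)) ^ ((1:ℝ)+q) := by
            have h6 : μ * (S (Idx j1) / S (Idx j0) - 1) * S (Idx j0)
                ≤ (S (Idx j1) / S (Idx j0))^((1:ℝ)+q) * S (Idx j0) :=
              mul_le_mul_of_nonneg_right hAMb ha0p.le
            have he : μ * (S (Idx j1) / S (Idx j0) - 1) * S (Idx j0)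
                = μ * (S (Idx j1) - S (Idx j0)) := by field_simp
            nlinarith [hpos (Idx j1)]
          have hlog1 : Real.log μ + Real.log (t (Idx j1)) ≤
              Real.log (S (Idx j0)) + (1+q) * (Real.log (S (Idx j1)) - Real.log (S (Idx j0))) := by
            have h7 := Real.log_le_log (mul_pos (by linarith) (hpos _)) hmul
            rw [Real.log_mul (by linarith) (hpos _).ne',
              Real.log_mul ha0p.ne'
                (by positivity : ((S (Idx j1) / S (Idx j0)) ^ ((1:ℝ)+q)) ≠ 0),
              Real.log_rpow (by positivity), Real.log_div ha1p.ne' ha0p.ne'] at h7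
            linarith
          have hgrow : Real.log (μ/(μ-1)) + Real.log (S (Idx j0)) ≤ Real.log (S (Idx j1)) := by
            have hβj1 : (β:ℝ)^(j1:ℕ) ≤ t (Idx j1) := h1 j1 hj1G
            have ha1le : S (Idx j1) ≤ μ * β^(j1:ℕ) := h2 j1 hj1G
            have hβj1p : (0:ℝ) < β^(j1:ℕ) := by positivity
            have hmuls : (μ/(μ-1)) * S (Idx j0) ≤ S (Idx j1) := by
              rw [div_mul_eq_mul_div, div_le_iff₀ hμ1]
              nlinarith
            have h8 := Real.log_le_log (mul_pos (by positivity) ha0p) hmuls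
            rwa [Real.log_mul (by positivity : (0:ℝ) < μ/(μ-1)).ne' ha0p.ne'] at h8
          have hj1L : Real.log (S (Idx j1)) - Real.log μ ≤ (j1:ℝ) * Real.log β := by
            have ha1le : S (Idx j1) ≤ μ * β^(j1:ℕ) := h2 j1 hj1G
            have h9 := Real.log_le_log ha1p ha1le
            rw [Real.log_mul (by linarith) (by positivity), Real.log_pow] at h9
            linarith
          have hj0L : (j0:ℝ) * Real.log β ≤ Real.log (t (Idx j0)) := by
            have h10 := Real.log_le_log (by positivity) (h1 j0 hj0)
            rwa [Real.log_pow] at h10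
          have hDelta : Real.log (μ/(μ-1)) ≤ Real.log (S (Idx j1)) - Real.log (S (Idx j0)) := by
            linarith
          have h5 : Real.log β ≤ (Real.log β / Real.log (μ/(μ-1)))
              * (Real.log (S (Idx j1)) - Real.log (S (Idx j0))) := by
            calc Real.log β
                = (Real.log β / Real.log (μ/(μ-1))) * Real.log (μ/(μ-1)) := by field_simp
              _ ≤ _ := mul_le_mul_of_nonneg_left hDelta (by positivity)
          have hKexp : K * Real.log (S (Idx j1)) - K * Real.log (S (Idx j0))
              = q * (Real.log (S (Idx j1)) - Real.log (S (Idx j0)))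
                + (Real.log β / Real.log (μ/(μ-1)))
                  * (Real.log (S (Idx j1)) - Real.log (S (Idx j0))) := by
            rw [hK]; ring
          have e1 : K * (Real.log (S (Idx M)) - Real.log (S (Idx j1)))
              = K * Real.log (S (Idx M)) - K * Real.log (S (Idx j1)) := by ring
          have e2 : K * (Real.log (S (Idx M)) - Real.log (S (Idx j0)))
              = K * Real.log (S (Idx M)) - K * Real.log (S (Idx j0)) := by ring
          have e3 : (1+q) * (Real.log (S (Idx j1)) - Real.log (S (Idx j0)))
              = (Real.log (S (Idx j1)) - Real.log (S (Idx j0)))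
                + q * (Real.log (S (Idx j1)) - Real.log (S (Idx j0))) := by ring
          linarith
      have hcards : ((G.card : ℝ) - 1) = ((G'.card : ℝ) - 1) + 1 := by
        rw [hcard, hcard']; push_cast; ring
      rw [hcards, add_mul, one_mul]
      calc ((G'.card:ℝ) - 1) * Real.log β + Real.log β
          ≤ ((Real.log (t (Idx j1)) - (j1 : ℝ) * Real.log β)
              + K * (Real.log (S (Idx M)) - Real.log (S (Idx j1)))) + Real.log β := by
            linarith [IH]
        _ ≤ _ := hstep

lemma zz_robot (t : ℕ → ℝ) (hpos : ∀ i, 0 < t i)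
    (μ q β : ℝ) (hμ : 1 < μ) (hq : 0 < q) (hβ : 1 < β)
    (hAM : ∀ b : ℝ, 1 < b → μ * (b-1) ≤ b ^ (1+q)) (N : ℕ)
    (G : Finset ℕ) (hGsub : G ⊆ Finset.range (N+1))
    (hG : ∀ j ∈ G, ∃ i, (β:ℝ)^j ≤ t i ∧ (∑ x ∈ Finset.range (i+1), t x) ≤ μ * β^j) :
    (G.card : ℝ) * Real.log β ≤ Real.log β + Real.log μ
      + (q + Real.log β / Real.log (μ/(μ-1))) * (Real.log μ + (N:ℝ) * Real.log β) := by
  classical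
  have hL : 0 < Real.log β := Real.log_pos hβ
  have hμ1 : 0 < μ - 1 := by linarith
  have hm : 0 < Real.log μ := Real.log_pos hμ
  have hρ : 1 < μ/(μ-1) := by rw [lt_div_iff₀ hμ1]; linarith
  have hLρ : 0 < Real.log (μ/(μ-1)) := Real.log_pos hρ
  have hKpos : (0:ℝ) < q + Real.log β / Real.log (μ/(μ-1)) := by positivity
  set S : ℕ → ℝ := fun i => ∑ x ∈ Finset.range (i+1), t x with hSdef
  have hSpos : ∀ i, 0 < S i :=
    fun i => Finset.sum_pos (fun x _ => hpos x) ⟨0, Finset.mem_range.mpr (Nat.succ_pos i)⟩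
  have hts : ∀ i, t i ≤ S i :=
    fun i => Finset.single_le_sum (fun x _ => (hpos x).le) (Finset.self_mem_range_succ i)
  have hSstep : ∀ i i', i < i' → S i + t i' ≤ S i' := by
    intro i i' hii
    have key : S i + ∑ x ∈ Finset.Ico (i + 1) (i' + 1), t x = S i' := by
      rw [hSdef]
      simp only [Finset.range_eq_Ico]
      exact Finset.sum_Ico_consecutive t (by omega) (by omega)
    have htin : t i' ≤ ∑ x ∈ Finset.Ico (i + 1) (i' + 1), t x :=
      Finset.single_le_sum (fun x _ => (hpos x).le) (Finset.mem_Ico.mpr ⟨by omega, by omega⟩)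
    linarith
  rcases G.eq_empty_or_nonempty with rfl | hne
  · simp only [Finset.card_empty, Nat.cast_zero, zero_mul]
    positivity
  · -- define Idx
    set Idx : ℕ → ℕ := fun j =>
      if h : ∃ i, (β:ℝ)^j ≤ t i then Nat.find h else 0 with hIdxdef
    have hIdx1 : ∀ j ∈ G, (β:ℝ)^j ≤ t (Idx j) := by
      intro j hj
      obtain ⟨i, hi1, _⟩ := hG j hj
      have hex : ∃ i, (β:ℝ)^j ≤ t i := ⟨i, hi1⟩
      simp only [hIdxdef, dif_pos hex]
      exact Nat.find_spec hex
    have hIdx2 : ∀ j ∈ G, S (Idx j) ≤ μ * β^j := by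
      intro j hj
      obtain ⟨i, hi1, hi2⟩ := hG j hj
      have hex : ∃ i, (β:ℝ)^j ≤ t i := ⟨i, hi1⟩
      have hle : Idx j ≤ i := by
        simp only [hIdxdef, dif_pos hex]
        exact Nat.find_min' hex hi1
      have hmono : S (Idx j) ≤ S i := by
        apply Finset.sum_le_sum_of_subset_of_nonneg
        · exact Finset.range_subset_range.mpr (by omega)
        · exact fun x _ _ => (hpos x).le
      exact hmono.trans hi2
    have hIdx3 : ∀ j ∈ G, ∀ j' ∈ G, j ≤ j' → Idx j ≤ Idx j' := by
      intro j hj j' hj' hle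
      obtain ⟨i, hi1, _⟩ := hG j hj
      have hex : ∃ i, (β:ℝ)^j ≤ t i := ⟨i, hi1⟩
      have hβmono : (β:ℝ)^j ≤ (β:ℝ)^j' := pow_le_pow_right₀ hβ.le hle
      have h2 : (β:ℝ)^j ≤ t (Idx j') := hβmono.trans (hIdx1 j' hj')
      simp only [hIdxdef, dif_pos hex]
      exact Nat.find_min' hex h2
    have hkey := zz_key t S hpos hSpos hts hSstep μ q β hμ hq hβ hAM Idx
      G.card G hne rfl hIdx1 hIdx2 hIdx3
    -- bound the RHS of hkey
    set jmin := G.min' hne with hjm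
    set jmax := G.max' hne with hjM
    have hjminG : jmin ∈ G := G.min'_mem hne
    have hjmaxG : jmax ∈ G := G.max'_mem hne
    have hslack : Real.log (t (Idx jmin)) - (jmin : ℝ) * Real.log β ≤ Real.log μ := by
      have h1 : t (Idx jmin) ≤ μ * β^(jmin:ℕ) := (hts _).trans (hIdx2 jmin hjminG)
      have := Real.log_le_log (hpos _) h1
      rw [Real.log_mul (by linarith) (by positivity), Real.log_pow] at this
      linarith
    have hvmax : Real.log (S (Idx jmax)) ≤ Real.log μ + (N:ℝ) * Real.log β := by
      have h1 : S (Idx jmax) ≤ μ * β^(jmax:ℕ) := hIdx2 jmax hjmaxG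
      have h2 := Real.log_le_log (hSpos _) h1
      rw [Real.log_mul (by linarith) (by positivity), Real.log_pow] at h2
      have hjmaxN : (jmax : ℝ) ≤ (N:ℝ) := by
        have := Finset.mem_range.mp (hGsub hjmaxG)
        exact_mod_cast Nat.lt_succ_iff.mp this
      nlinarith
    have hvmin : 0 ≤ Real.log (S (Idx jmin)) := by
      have h1 : (1:ℝ) ≤ β^(jmin:ℕ) := one_le_pow₀ hβ.le
      have h2 : (1:ℝ) ≤ S (Idx jmin) := h1.trans ((hIdx1 jmin hjminG).trans (hts _))
      exact Real.log_nonneg h2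
    have hbound : (q + Real.log β / Real.log (μ/(μ-1))) *
        (Real.log (S (Idx jmax)) - Real.log (S (Idx jmin)))
        ≤ (q + Real.log β / Real.log (μ/(μ-1))) * (Real.log μ + (N:ℝ) * Real.log β) := by
      apply mul_le_mul_of_nonneg_left _ hKpos.le
      linarith
    have : ((G.card : ℝ) - 1) * Real.log β
        ≤ Real.log μ + (q + Real.log β / Real.log (μ/(μ-1))) * (Real.log μ + (N:ℝ) * Real.log β) := by
      calc ((G.card : ℝ) - 1) * Real.log β ≤ _ := hkey
        _ ≤ _ := by linarith
    nlinarith [hL]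

lemma zz_ident (k s : ℕ) (hs : 1 ≤ s) (hsk : s ≤ k) :
    (((k + s : ℕ) : ℝ) ^ (k + s) / ((s : ℝ) ^ s * (k : ℝ) ^ k)) ^ ((1 : ℝ) / k)
      = (1 + (s:ℝ)/(k:ℝ))^(1 + (s:ℝ)/(k:ℝ)) / ((s:ℝ)/(k:ℝ))^((s:ℝ)/(k:ℝ)) := by
  have hk1 : 1 ≤ k := le_trans hs hsk
  have hK : (0:ℝ) < (k:ℝ) := by exact_mod_cast hk1
  have hS : (0:ℝ) < (s:ℝ) := by exact_mod_cast hs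
  have hKS : (0:ℝ) < ((k+s:ℕ):ℝ) := by push_cast; linarith
  have hq0 : (0:ℝ) < (s:ℝ)/(k:ℝ) := by positivity
  have hq1 : (0:ℝ) < 1 + (s:ℝ)/(k:ℝ) := by positivity
  have hXpos : (0:ℝ) < ((k + s : ℕ) : ℝ) ^ (k + s) / ((s : ℝ) ^ s * (k : ℝ) ^ k) := by
    positivity
  have hlhs : (0:ℝ) < (((k + s : ℕ) : ℝ) ^ (k + s) / ((s : ℝ) ^ s * (k : ℝ) ^ k)) ^ ((1 : ℝ) / k) :=
    Real.rpow_pos_of_pos hXpos _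
  have hrhs : (0:ℝ) < (1 + (s:ℝ)/(k:ℝ))^(1 + (s:ℝ)/(k:ℝ)) / ((s:ℝ)/(k:ℝ))^((s:ℝ)/(k:ℝ)) := by
    exact div_pos (Real.rpow_pos_of_pos hq1 _) (Real.rpow_pos_of_pos hq0 _)
  apply Real.log_injOn_pos (Set.mem_Ioi.mpr hlhs) (Set.mem_Ioi.mpr hrhs)
  rw [Real.log_rpow hXpos, Real.log_div (by positivity) (by positivity),
    Real.log_mul (by positivity) (by positivity),
    Real.log_pow, Real.log_pow, Real.log_pow,
    Real.log_div (ne_of_gt (Real.rpow_pos_of_pos hq1 _)) (ne_of_gt (Real.rpow_pos_of_pos hq0 _)),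
    Real.log_rpow hq1, Real.log_rpow hq0]
  have e1 : (1 : ℝ) + (s:ℝ)/(k:ℝ) = ((k:ℝ) + (s:ℝ))/(k:ℝ) := by field_simp
  have e2 : Real.log (((k:ℝ) + (s:ℝ))/(k:ℝ)) = Real.log ((k:ℝ)+(s:ℝ)) - Real.log (k:ℝ) :=
    Real.log_div (by linarith) hK.ne'
  have e3 : Real.log ((s:ℝ)/(k:ℝ)) = Real.log (s:ℝ) - Real.log (k:ℝ) :=
    Real.log_div hS.ne' hK.ne'
  have e4 : ((k+s:ℕ):ℝ) = (k:ℝ) + (s:ℝ) := by push_cast; ring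
  rw [e1, e2, e3, e4]
  push_cast
  field_simp
  ring

lemma zz_mu_gt_one (k s : ℕ) (hs : 1 ≤ s)
    (t : Fin k → ℕ → ℝ) (hpos : ∀ r i, 0 < t r i) (μ : ℝ)
    (hcov : ∀ x : ℝ, 1 ≤ x →
      s ≤ {r : Fin k | ∃ i : ℕ, x ≤ t r i ∧
            (∑ j ∈ Finset.range (i + 1), t r j) ≤ μ * x}.ncard) :
    1 < μ := by
  by_contra hμ
  push_neg at hμ
  have hchoice : ∀ m : ℕ, ∃ r : Fin k, ∃ i : ℕ, ((m:ℝ)+1) ≤ t r i ∧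
      (∑ j ∈ Finset.range (i + 1), t r j) ≤ μ * ((m:ℝ)+1) := by
    intro m
    have hx : (1:ℝ) ≤ (m:ℝ)+1 := by linarith [Nat.cast_nonneg (α := ℝ) m]
    have := hcov ((m:ℝ)+1) hx
    have hne : {r : Fin k | ∃ i : ℕ, ((m:ℝ)+1) ≤ t r i ∧
        (∑ j ∈ Finset.range (i + 1), t r j) ≤ μ * ((m:ℝ)+1)}.Nonempty := by
      apply Set.nonempty_of_ncard_ne_zero
      omega
    exact hne
  choose f i hf1 hf2 using hchoice
  have hval : ∀ m : ℕ, t (f m) 0 = (m:ℝ)+1 := by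
    intro m
    have hx : (0:ℝ) < (m:ℝ)+1 := by positivity
    have hSt : t (f m) (i m) ≤ ∑ j ∈ Finset.range (i m + 1), t (f m) j :=
      Finset.single_le_sum (f := fun j => t (f m) j) (fun x _ => (hpos _ x).le)
        (Finset.self_mem_range_succ _)
    have hμx : μ * ((m:ℝ)+1) ≤ (m:ℝ)+1 := by nlinarith
    have heq : t (f m) (i m) = (m:ℝ)+1 := le_antisymm (by linarith [hf2 m]) (hf1 m)
    have hsum0 : ∑ j ∈ Finset.range (i m), t (f m) j ≤ 0 := by
      have := Finset.sum_range_succ (t (f m)) (i m)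
      have h2 := hf2 m
      rw [this] at h2
      linarith
    have hi0 : i m = 0 := by
      by_contra hne0
      have h1 : t (f m) 0 ≤ ∑ j ∈ Finset.range (i m), t (f m) j :=
        Finset.single_le_sum (f := fun j => t (f m) j) (fun x _ => (hpos _ x).le)
          (Finset.mem_range.mpr (Nat.pos_of_ne_zero hne0))
      linarith [hpos (f m) 0]
    rw [← hi0]; exact heq
  have hinj : Function.Injective f := by
    intro m m' hmm
    have : (m:ℝ)+1 = (m':ℝ)+1 := by rw [← hval m, ← hval m', hmm]
    exact_mod_cast add_right_cancel this
  obtain ⟨m, m', hne, heq⟩ := Finite.exists_ne_map_eq_of_infinite f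
  exact hne (hinj heq)

theorem zigzag_cover_lower_bound
    (k s : ℕ) (hs : 1 ≤ s) (hsk : s ≤ k)
    (lam : ℝ) (hlam : 1 < lam)
    (t : Fin k → ℕ → ℝ)
    (hpos : ∀ r i, 0 < t r i)
    (hmono : ∀ r, Monotone (t r))
    (hcov : ∀ x : ℝ, 1 ≤ x →
      s ≤ {r : Fin k | ∃ i : ℕ, x ≤ t r i ∧
            (∑ j ∈ Finset.range (i + 1), t r j) ≤ ((lam - 1) / 2) * x}.ncard) :
    2 * (((k + s : ℕ) : ℝ) ^ (k + s) / ((s : ℝ) ^ s * (k : ℝ) ^ k)) ^ ((1 : ℝ) / k) + 1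
      ≤ lam := by
  classical
  by_contra hcon
  push_neg at hcon
  set μ := (lam - 1) / 2 with hμdef
  have hk1 : 1 ≤ k := le_trans hs hsk
  have hK : (0:ℝ) < (k:ℝ) := by exact_mod_cast hk1
  have hS : (0:ℝ) < (s:ℝ) := by exact_mod_cast hs
  set q0 : ℝ := (s:ℝ)/(k:ℝ) with hq0def
  have hq0 : 0 < q0 := by positivity
  have hμlt : μ < (1+q0)^(1+q0)/q0^q0 := by
    rw [hq0def, ← zz_ident k s hs hsk, hμdef]
    linarith
  have hμ1 : 1 < μ := zz_mu_gt_one k s hs t hpos μ hcov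
  have hμpos : 0 < μ := by linarith
  have hmμ : 0 < Real.log μ := Real.log_pos hμ1
  obtain ⟨q, hqpos, hqlt, hqμ⟩ := zz_choose_q μ q0 hq0 hμlt
  have hAM : ∀ b : ℝ, 1 < b → μ * (b-1) ≤ b^(1+q) := fun b hb =>
    le_trans (mul_le_mul_of_nonneg_right hqμ (by linarith)) (zz_amgm q b hqpos hb)
  set ε : ℝ := q0 - q with hεdef
  have hε : 0 < ε := by rw [hεdef]; linarith
  have hμ1' : 0 < μ - 1 := by linarith
  have hρ1 : 1 < μ/(μ-1) := by rw [lt_div_iff₀ hμ1']; linarith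
  have hLρ : 0 < Real.log (μ/(μ-1)) := Real.log_pos hρ1
  set β : ℝ := (μ/(μ-1))^(ε/2 : ℝ) with hβdef
  have hβ1 : 1 < β := by
    rw [hβdef]
    exact Real.one_lt_rpow_iff_of_pos (by positivity) |>.mpr (Or.inl ⟨hρ1, by positivity⟩)
  have hLβ : Real.log β = (ε/2) * Real.log (μ/(μ-1)) := by
    rw [hβdef]; exact Real.log_rpow (by positivity) _
  have hL : 0 < Real.log β := Real.log_pos hβ1
  have hκ : Real.log β / Real.log (μ/(μ-1)) = ε/2 := by
    rw [hLβ]; field_simp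
  -- grid coverage inequality for every N
  have hgrid : ∀ N : ℕ, ((s:ℝ) * ((N:ℝ)+1)) * Real.log β
      ≤ (k:ℝ) * (Real.log β + Real.log μ + (q + ε/2) * (Real.log μ + (N:ℝ) * Real.log β)) := by
    intro N
    set P : Fin k → ℕ → Prop := fun r j => ∃ i, (β:ℝ)^j ≤ t r i ∧
      (∑ x ∈ Finset.range (i+1), t r x) ≤ μ * β^j with hPdef
    have hcount : s * (N+1) ≤ ∑ r : Fin k,
        (Finset.filter (fun j => P r j) (Finset.range (N+1))).card := by
      have hswap : ∑ j ∈ Finset.range (N+1),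
          (Finset.filter (fun r : Fin k => P r j) Finset.univ).card
          = ∑ r : Fin k, (Finset.filter (fun j => P r j) (Finset.range (N+1))).card := by
        simp only [Finset.card_filter]
        rw [Finset.sum_comm]
      rw [← hswap]
      have hj : ∀ j ∈ Finset.range (N+1),
          s ≤ (Finset.filter (fun r : Fin k => P r j) Finset.univ).card := by
        intro j _
        have hx : (1:ℝ) ≤ β^j := one_le_pow₀ hβ1.le
        have h1 := hcov (β^j) hx
        have h2 : {r : Fin k | ∃ i : ℕ, β^j ≤ t r i ∧
            (∑ x ∈ Finset.range (i + 1), t r x) ≤ μ * β^j}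
            = ↑(Finset.filter (fun r : Fin k => P r j) Finset.univ) := by
          ext r
          simp [hPdef]
        rw [h2, Set.ncard_coe_finset] at h1
        exact h1
      calc s * (N+1) = ∑ _j ∈ Finset.range (N+1), s := by
            rw [Finset.sum_const, Finset.card_range]; ring
        _ ≤ _ := Finset.sum_le_sum hj
    have hrob : ∀ r : Fin k,
        ((Finset.filter (fun j => P r j) (Finset.range (N+1))).card : ℝ) * Real.log β
        ≤ Real.log β + Real.log μ + (q + ε/2) * (Real.log μ + (N:ℝ) * Real.log β) := by
      intro r
      have := zz_robot (t r) (hpos r) μ q β hμ1 hqpos hβ1 hAM N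
        (Finset.filter (fun j => P r j) (Finset.range (N+1)))
        (Finset.filter_subset _ _)
        (fun j hj => (Finset.mem_filter.mp hj).2)
      rwa [hκ] at this
    have hcastsum : ((s * (N+1) : ℕ) : ℝ) ≤ ∑ r : Fin k,
        ((Finset.filter (fun j => P r j) (Finset.range (N+1))).card : ℝ) := by
      rw [← Nat.cast_sum]
      exact_mod_cast hcount
    have hsum2 : (∑ r : Fin k,
        ((Finset.filter (fun j => P r j) (Finset.range (N+1))).card : ℝ)) * Real.log β
        ≤ (k:ℝ) * (Real.log β + Real.log μ + (q + ε/2) * (Real.log μ + (N:ℝ) * Real.log β)) := by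
      rw [Finset.sum_mul]
      calc ∑ r : Fin k, ((Finset.filter (fun j => P r j) (Finset.range (N+1))).card : ℝ)
            * Real.log β
          ≤ ∑ _r : Fin k, (Real.log β + Real.log μ
              + (q + ε/2) * (Real.log μ + (N:ℝ) * Real.log β)) :=
            Finset.sum_le_sum (fun r _ => hrob r)
        _ = (k:ℝ) * (Real.log β + Real.log μ + (q + ε/2) * (Real.log μ + (N:ℝ) * Real.log β)) := by
            rw [Finset.sum_const, Finset.card_univ, Fintype.card_fin, nsmul_eq_mul]
    calc ((s:ℝ) * ((N:ℝ)+1)) * Real.log β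
        = ((s * (N+1) : ℕ) : ℝ) * Real.log β := by push_cast; ring
      _ ≤ _ := mul_le_mul_of_nonneg_right hcastsum hL.le
      _ ≤ _ := hsum2
  -- final contradiction
  set Lb : ℝ := Real.log β with hLbdef
  set m : ℝ := Real.log μ with hmdef
  clear_value Lb m
  clear hLβ hκ hβ1 hβdef
  clear_value β μ
  have hkq2 : (k:ℝ)*q = (s:ℝ) - (k:ℝ)*ε := by
    rw [hεdef, hq0def]; field_simp; ring
  clear hεdef hq0def hqlt hq0
  clear_value ε q0
  obtain ⟨N, hN⟩ := exists_nat_gt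
    (((k:ℝ) * (Lb + m + (q + ε/2) * m)) / ((k:ℝ)*ε/2 * Lb))
  have h1 := hgrid N
  have hDpos : 0 < (k:ℝ)*ε/2 * Lb := by positivity
  have hprod : ((k:ℝ)*q) * ((N:ℝ)*Lb) = ((s:ℝ) - (k:ℝ)*ε) * ((N:ℝ)*Lb) := by
    rw [hkq2]
  have hslβ : 0 ≤ (s:ℝ) * Lb := by positivity
  rw [div_lt_iff₀ hDpos] at hN
  nlinarith [h1, hprod, hslβ]
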